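/- For each cyclic permutation (i,j,k) of (1,2,3) and all signs ε, δ ∈ {+1,−1}: (K+1)(X_k · I_{ij}^ε P_i^δ) = 2 X_k I_{ij}^ε P_i^δ − (ε/2) X₁X₂X₃. -/
import Mathlib


open scoped TensorProduct

noncomputable section

/-- The standard positive-definite quadratic form on `ℝ³`. -/
abbrev Q3 : QuadraticForm ℝ (Fin 3 → ℝ) :=
  QuadraticMap.weightedSumSquares ℝ (fun _ : Fin 3 => (1 : ℝ))

/-- The Clifford algebra of 3-dimensional Euclidean space. -/
abbrev Cl3 : Type := CliffordAlgebra Q3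

/-- The tensor product of two copies of `Cl3`, as ℝ-algebras. -/
abbrev A3 : Type := Cl3 ⊗[ℝ] Cl3

/-- The generators `e₁, e₂, e₃` (indexed by `Fin 3`). -/
def e (l : Fin 3) : Cl3 := CliffordAlgebra.ι Q3 (Pi.single l 1)

/-- `X_l := e_l ⊗ e_l`. -/
def X (l : Fin 3) : A3 := e l ⊗ₜ[ℝ] e l

/-- `w^i := (e_j e_k) ⊗ 1` for `(i,j,k)` a cyclic permutation of the indices. -/
def w (i : Fin 3) : A3 := (e (i + 1) * e (i + 2)) ⊗ₜ[ℝ] (1 : Cl3)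

/-- The (ℝ-linear) operators `J_l(U) := (1/2)(w^l U − U w^l)`. -/
def J (l : Fin 3) (U : A3) : A3 := (1/2 : ℝ) • (w l * U - U * w l)

/-- Kähler's total angular momentum operator `K+1`. -/
def K1 (U : A3) : A3 := J 0 U * w 0 + J 1 U * w 1 + J 2 U * w 2

/-- The idempotents `I_{ij}^ε := (1/2)(1 + ε X_i X_j)`. -/
def Iem (i j : Fin 3) (ε : ℝ) : A3 := (1/2 : ℝ) • ((1 : A3) + ε • (X i * X j))

/-- The idempotents `P_l^δ := (1/2)(1 + δ X_l)`. -/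
def P (l : Fin 3) (δ : ℝ) : A3 := (1/2 : ℝ) • ((1 : A3) + δ • X l)

lemma e_sq (l : Fin 3) : e l * e l = 1 := by
  rw [e, CliffordAlgebra.ι_sq_scalar]
  simp [QuadraticMap.weightedSumSquares_apply, Pi.single_apply, Fin.sum_univ_three]

lemma e_swap {l m : Fin 3} (h : l ≠ m) : e m * e l = -(e l * e m) := by
  have h2 := CliffordAlgebra.ι_mul_ι_add_swap (Q := Q3) (Pi.single l 1) (Pi.single m 1)
  have hp : QuadraticMap.polar Q3 (Pi.single l 1) (Pi.single m 1) = 0 := by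
    simp [QuadraticMap.polar, QuadraticMap.weightedSumSquares_apply, Fin.sum_univ_three,
      Pi.single_apply]
    fin_cases l <;> fin_cases m <;> simp_all
  rw [hp] at h2
  simp at h2
  rw [e, e]
  linear_combination (norm := noncomm_ring) h2

lemma e_sq' (l : Fin 3) (x : Cl3) : e l * (e l * x) = x := by
  rw [← mul_assoc, e_sq, one_mul]
lemma es10 : e 1 * e 0 = -(e 0 * e 1) := e_swap (by decide)
lemma es20 : e 2 * e 0 = -(e 0 * e 2) := e_swap (by decide)
lemma es21 : e 2 * e 1 = -(e 1 * e 2) := e_swap (by decide)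
lemma es10' (x : Cl3) : e 1 * (e 0 * x) = -(e 0 * (e 1 * x)) := by
  rw [← mul_assoc, es10]; simp [mul_assoc]
lemma es20' (x : Cl3) : e 2 * (e 0 * x) = -(e 0 * (e 2 * x)) := by
  rw [← mul_assoc, es20]; simp [mul_assoc]
lemma es21' (x : Cl3) : e 2 * (e 1 * x) = -(e 1 * (e 2 * x)) := by
  rw [← mul_assoc, es21]; simp [mul_assoc]
lemma w0eq : w 0 = (e 1 * e 2) ⊗ₜ[ℝ] (1 : Cl3) := rfl
lemma w1eq : w 1 = (e 2 * e 0) ⊗ₜ[ℝ] (1 : Cl3) := rfl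
lemma w2eq : w 2 = (e 0 * e 1) ⊗ₜ[ℝ] (1 : Cl3) := rfl

set_option maxHeartbeats 1000000 in
/-- For each cyclic permutation `(i,j,k)` and signs `ε, δ`:
`(K+1)(X_k I_{ij}^ε P_i^δ) = 2 X_k I_{ij}^ε P_i^δ − (ε/2) X₁X₂X₃`. -/
theorem stmt10 (i j k : Fin 3) (hj : j = i + 1) (hk : k = i + 2)
    (ε δ : ℝ) (hε : ε = 1 ∨ ε = -1) (hδ : δ = 1 ∨ δ = -1) :
    K1 (X k * (Iem i j ε * P i δ)) =
      2 * (X k * (Iem i j ε * P i δ)) - (ε / 2) • (X 0 * X 1 * X 2) := by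
  subst hj hk
  have h3 : i = 0 ∨ i = 1 ∨ i = 2 := by fin_cases i <;> simp
  rcases h3 with rfl | rfl | rfl <;>
  · simp only [K1, J, Iem, P, X, w0eq, w1eq, w2eq, two_mul, Fin.reduceAdd, Fin.isValue]
    simp only [mul_add, add_mul, mul_sub, sub_mul, smul_mul_assoc, mul_smul_comm,
      smul_add, smul_sub, smul_smul, mul_one, one_mul,
      Algebra.TensorProduct.tmul_mul_tmul, Algebra.TensorProduct.one_def]
    simp only [mul_assoc, e_sq, e_sq', es10, es20, es21, es10', es20', es21',
      mul_one, one_mul, mul_neg, neg_mul, neg_neg, TensorProduct.neg_tmul,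
      TensorProduct.tmul_neg, smul_neg]
    module
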